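/- Let μ ∈ (0,1], C > 0, K > 0, and let 0 < r < 1/(2eK). Suppose u is holomorphic on the open set D := {z ∈ ℂ : dist(z, [0,1]) < r} and satisfies |u^{(n)}(x)| ≤ C·K^n·max{n, μ^{-1}}^n for all x ∈ [0,1] and all n ∈ ℕ. Then there exists a constant Ĉ > 0, depending only on C, K, and r (and not on μ), such that |u(z)| ≤ Ĉ·e^{rK/μ} for all z ∈ D. -/

import Mathlib

open Set

/-- μ-explicit derivative bounds of a holomorphic function on the segment
`[0,1] ⊂ ℂ` yield the pointwise bound `|u(z)| ≤ Ĉ e^{rK/μ}` on the complex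
`r`-neighborhood of the segment, with `Ĉ` depending only on `C`, `K`, `r`
(not on `μ`). -/
theorem stmt_19 (C K r : ℝ) (hC : 0 < C) (hK : 0 < K)
    (hr : 0 < r) (hr' : r < 1 / (2 * Real.exp 1 * K)) :
    ∃ Chat : ℝ, 0 < Chat ∧
      ∀ μ : ℝ, 0 < μ → μ ≤ 1 →
      ∀ u : ℂ → ℂ,
        DifferentiableOn ℂ u
          {z : ℂ | Metric.infDist z ((fun t : ℝ => (t : ℂ)) '' Icc 0 1) < r} →
        (∀ n : ℕ, ∀ x ∈ Icc (0:ℝ) 1,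
          ‖iteratedDeriv n u (x : ℂ)‖ ≤
            C * K ^ n * (max (n : ℝ) μ⁻¹) ^ n) →
        ∀ z ∈ {z : ℂ | Metric.infDist z ((fun t : ℝ => (t : ℂ)) '' Icc 0 1) < r},
          ‖u z‖ ≤ Chat * Real.exp (r * K / μ) := by
  have he : (0:ℝ) < Real.exp 1 := Real.exp_pos 1
  have h2eK : (0:ℝ) < 2 * Real.exp 1 * K := by positivity
  have hrK : r * K * Real.exp 1 < 1 / 2 := by
    have h1 : r * (2 * Real.exp 1 * K) < 1 := by
      have := (lt_div_iff₀ h2eK).mp hr'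
      linarith
    nlinarith
  refine ⟨3 * C, by positivity, ?_⟩
  intro μ hμ hμ1 u hu hderiv z hz
  set S : Set ℂ := (fun t : ℝ => (t : ℂ)) '' Icc 0 1 with hS
  have hSne : S.Nonempty := ⟨0, 0, by simp, by simp⟩
  obtain ⟨w, hwS, hw⟩ :=
    (isCompact_Icc.image Complex.continuous_ofReal).exists_infDist_eq_dist hSne z
  obtain ⟨x, hx, rfl⟩ := hwS
  have hdz : dist z (x:ℂ) < r := by
    rw [← hw]; exact hz
  -- the ball around x is inside the domain
  have hball : DifferentiableOn ℂ u (Metric.ball (x:ℂ) r) := by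
    refine hu.mono fun w hwb => ?_
    have : Metric.infDist w S ≤ dist w (x:ℂ) :=
      Metric.infDist_le_dist_of_mem ⟨x, hx, rfl⟩
    exact lt_of_le_of_lt this (Metric.mem_ball.mp hwb)
  have hsum := Complex.hasSum_taylorSeries_on_ball hball (Metric.mem_ball.mpr hdz)
  -- the majorant
  set h : ℕ → ℝ := fun n => C * (1/2) ^ n + C * ((r * K / μ) ^ n / n.factorial) with hh
  have hsummh : Summable h := by
    apply Summable.add
    · exact (summable_geometric_of_lt_one (by norm_num) (by norm_num)).mul_left C
    · exact (Real.summable_pow_div_factorial (r * K / μ)).mul_left C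
  -- termwise bound
  have hterm : ∀ n : ℕ,
      ‖(n.factorial : ℂ)⁻¹ • (z - (x:ℂ)) ^ n • iteratedDeriv n u (x:ℂ)‖ ≤ h n := by
    intro n
    have hfac : (0:ℝ) < n.factorial := by positivity
    have hnn : (0:ℝ) ≤ (n:ℝ) := n.cast_nonneg
    have hμinv : (0:ℝ) ≤ μ⁻¹ := by positivity
    have hb : ‖(n.factorial : ℂ)⁻¹ • (z - (x:ℂ)) ^ n • iteratedDeriv n u (x:ℂ)‖
        ≤ (n.factorial : ℝ)⁻¹ * (r ^ n * (C * K ^ n * (max (n:ℝ) μ⁻¹) ^ n)) := by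
      rw [norm_smul, norm_smul, norm_pow]
      have h1 : ‖(n.factorial : ℂ)⁻¹‖ = (n.factorial : ℝ)⁻¹ := by
        simp
      rw [h1]
      refine mul_le_mul_of_nonneg_left ?_ (by positivity)
      refine mul_le_mul ?_ (hderiv n x hx) (by positivity) (by positivity)
      have : ‖z - (x:ℂ)‖ ≤ r := by
        rw [← Complex.dist_eq]
        exact hdz.le
      exact pow_le_pow_left₀ (norm_nonneg _) this n
    refine hb.trans ?_
    -- max(n, μ⁻¹)^n ≤ n^n + μ⁻ⁿ
    have hmax : (max (n:ℝ) μ⁻¹) ^ n ≤ (n:ℝ) ^ n + (μ⁻¹) ^ n := by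
      rcases max_cases (n:ℝ) μ⁻¹ with ⟨h1, _⟩ | ⟨h1, _⟩ <;> rw [h1]
      · nlinarith [pow_nonneg hμinv n]
      · nlinarith [pow_nonneg hnn n]
    have key : (n.factorial : ℝ)⁻¹ * (r ^ n * (C * K ^ n * (max (n:ℝ) μ⁻¹) ^ n))
        ≤ C * ((r*K) ^ n * ((n:ℝ) ^ n / n.factorial)) + C * ((r * K / μ) ^ n / n.factorial) := by
      have e1 : (n.factorial : ℝ)⁻¹ * (r ^ n * (C * K ^ n * ((n:ℝ) ^ n + (μ⁻¹) ^ n)))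
          = C * ((r*K) ^ n * ((n:ℝ) ^ n / n.factorial)) + C * ((r * K / μ) ^ n / n.factorial) := by
        field_simp
        ring
      rw [← e1]
      refine mul_le_mul_of_nonneg_left ?_ (by positivity)
      refine mul_le_mul_of_nonneg_left ?_ (by positivity)
      exact mul_le_mul_of_nonneg_left hmax (by positivity)
    refine key.trans ?_
    rw [hh]
    simp only []
    gcongr
    -- (rK)^n * n^n/n! ≤ (1/2)^n
    have hnn' : ((n:ℝ)) ^ n / n.factorial ≤ Real.exp 1 ^ n := by
      have := Real.pow_div_factorial_le_exp (n:ℝ) hnn n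
      calc ((n:ℝ)) ^ n / n.factorial ≤ Real.exp n := this
        _ = Real.exp 1 ^ n := by rw [← Real.exp_nat_mul]; norm_num
    calc (r*K) ^ n * ((n:ℝ) ^ n / n.factorial)
        ≤ (r*K) ^ n * Real.exp 1 ^ n := by
          refine mul_le_mul_of_nonneg_left hnn' (by positivity)
      _ = (r * K * Real.exp 1) ^ n := by ring
      _ ≤ (1/2:ℝ) ^ n := pow_le_pow_left₀ (by positivity) hrK.le n
  -- summability of norms
  have hsummf : Summable fun n : ℕ =>
      ‖(n.factorial : ℂ)⁻¹ • (z - (x:ℂ)) ^ n • iteratedDeriv n u (x:ℂ)‖ :=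
    Summable.of_nonneg_of_le (fun n => norm_nonneg _) hterm hsummh
  -- compute tsum of majorant
  have htsum : ∑' n, h n = 2 * C + C * Real.exp (r * K / μ) := by
    rw [hh, Summable.tsum_add ((summable_geometric_of_lt_one (by norm_num) (by norm_num)).mul_left C)
      ((Real.summable_pow_div_factorial (r * K / μ)).mul_left C)]
    rw [tsum_mul_left, tsum_mul_left, tsum_geometric_of_lt_one (by norm_num) (by norm_num)]
    have : ∑' n : ℕ, (r * K / μ) ^ n / n.factorial = Real.exp (r * K / μ) := by
      rw [Real.exp_eq_exp_ℝ, NormedSpace.exp_eq_tsum_div]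
    rw [this]
    norm_num
    ring
  have hbound : ‖u z‖ ≤ ∑' n, h n := by
    have h1 : ‖u z‖ = ‖u z‖ := rfl
    rw [h1, ← hsum.tsum_eq]
    refine (norm_tsum_le_tsum_norm hsummf).trans ?_
    exact Summable.tsum_le_tsum hterm hsummf hsummh
  refine hbound.trans ?_
  rw [htsum]
  have hexp1 : (1:ℝ) ≤ Real.exp (r * K / μ) := by
    rw [Real.one_le_exp_iff]
    positivity
  nlinarith
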